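/- (Spin-1/2 LSM theorem, MPS form.) Let σx = !![0, 1; 1, 0] and σz = !![1, 0; 0, -1] be the Pauli matrices in Matrix (Fin 2) (Fin 2) ℂ. Let N ≥ 1, let A : Fin 2 → Matrix (Fin N) (Fin N) ℂ, and suppose there exist unitary matrices Vx, Vz ∈ Matrix (Fin N) (Fin N) ℂ such that for all m : Fin 2, ∑ n, σx m n • A n = Vxᴴ * A m * Vx and ∑ n, σz m n • A n = Vzᴴ * A m * Vz (i.e. the translation-invariant MPS is invariant under the on-site π-rotations about the x- and z-axes of a spin-1/2 chain). Then for every I ≥ 1 the map Γ_I is not injective; hence a spin-1/2 chain with these symmetries admits no injective (unique gapped) matrix product ground state. -/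

import Mathlib

open Matrix

/-- The MPS map `Γ_I`: given an MPS tensor `A`, length `I` and a boundary matrix `M`,
returns the coefficient function `σ ↦ trace (M * A (σ 0) * ⋯ * A (σ (I-1)))`. -/
noncomputable def GammaMPS {N : ℕ} {ι : Type*} (A : ι → Matrix (Fin N) (Fin N) ℂ)
    (I : ℕ) (M : Matrix (Fin N) (Fin N) ℂ) : (Fin I → ι) → ℂ :=
  fun σ => Matrix.trace (M * (List.ofFn fun i => A (σ i)).prod)

/-- Spin-1/2 LSM theorem in MPS form: a translation-invariant MPS invariant under the
on-site π-rotations about the x- and z-axes (Pauli `σx` and `σz`) of a spin-1/2 chain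
admits no injective (unique gapped) matrix product ground state. -/
theorem spin_half_LSM {N : ℕ} (hN : 1 ≤ N)
    (A : Fin 2 → Matrix (Fin N) (Fin N) ℂ)
    (Vx Vz : Matrix (Fin N) (Fin N) ℂ)
    (hVx : Vx ∈ Matrix.unitaryGroup (Fin N) ℂ)
    (hVz : Vz ∈ Matrix.unitaryGroup (Fin N) ℂ)
    (hsymx : ∀ m : Fin 2, ∑ n, (!![0, 1; 1, 0] : Matrix (Fin 2) (Fin 2) ℂ) m n • A n
      = Vxᴴ * A m * Vx)
    (hsymz : ∀ m : Fin 2, ∑ n, (!![1, 0; 0, -1] : Matrix (Fin 2) (Fin 2) ℂ) m n • A n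
      = Vzᴴ * A m * Vz) :
    ∀ I, 1 ≤ I → ¬ Function.Injective (GammaMPS A I) := by
  -- extract the symmetry equations
  have hx0 : Vxᴴ * A 0 * Vx = A 1 := by
    have h := hsymx 0
    simp [Fin.sum_univ_two] at h
    exact h.symm
  have hx1 : Vxᴴ * A 1 * Vx = A 0 := by
    have h := hsymx 1
    simp [Fin.sum_univ_two] at h
    exact h.symm
  have hz0 : Vzᴴ * A 0 * Vz = A 0 := by
    have h := hsymz 0
    simp [Fin.sum_univ_two] at h
    exact h.symm
  have hz1 : Vzᴴ * A 1 * Vz = -A 1 := by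
    have h := hsymz 1
    simp [Fin.sum_univ_two] at h
    exact h.symm
  -- the special unitary
  have hUmem : (Vx * Vz * Vx * Vz) ∈ Matrix.unitaryGroup (Fin N) ℂ :=
    mul_mem (mul_mem (mul_mem hVx hVz) hVx) hVz
  set U : Matrix (Fin N) (Fin N) ℂ := Vx * Vz * Vx * Vz with hUdef
  have hU1 : Uᴴ * U = 1 := by
    simpa [Matrix.star_eq_conjTranspose] using hUmem.1
  have hU2 : U * Uᴴ = 1 := by
    simpa [Matrix.star_eq_conjTranspose] using hUmem.2
  have expand : ∀ B : Matrix (Fin N) (Fin N) ℂ,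
      Uᴴ * B * U = Vzᴴ * (Vxᴴ * (Vzᴴ * (Vxᴴ * B * Vx) * Vz) * Vx) * Vz := by
    intro B
    rw [hUdef]
    simp only [conjTranspose_mul]
    noncomm_ring
  have key0 : Uᴴ * A 0 * U = -(A 0) := by
    rw [expand, hx0, hz1, Matrix.mul_neg, Matrix.neg_mul, hx1,
      Matrix.mul_neg, Matrix.neg_mul, hz0]
  have key1 : Uᴴ * A 1 * U = -(A 1) := by
    rw [expand, hx1, hz0, hx0, hz1]
  have key : ∀ m : Fin 2, Uᴴ * A m * U = -(A m) := by
    intro m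
    fin_cases m
    · exact key0
    · exact key1
  have AU : ∀ m : Fin 2, A m * U = -(U * A m) := by
    intro m
    calc A m * U = (U * Uᴴ) * (A m * U) := by rw [hU2, Matrix.one_mul]
      _ = U * (Uᴴ * A m * U) := by noncomm_ring
      _ = -(U * A m) := by rw [key m, Matrix.mul_neg]
  have prodkey : ∀ L : List (Fin 2),
      (L.map A).prod * U = ((-1 : ℂ) ^ L.length) • (U * (L.map A).prod) := by
    intro L
    induction L with
    | nil => simp
    | cons a t ih =>
      simp only [List.map_cons, List.prod_cons, List.length_cons, pow_succ]
      calc A a * (t.map A).prod * U = A a * ((t.map A).prod * U) := by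
            rw [Matrix.mul_assoc]
        _ = A a * (((-1 : ℂ) ^ t.length) • (U * (t.map A).prod)) := by rw [ih]
        _ = ((-1 : ℂ) ^ t.length) • (A a * U * (t.map A).prod) := by
            rw [Matrix.mul_smul, ← Matrix.mul_assoc]
        _ = ((-1 : ℂ) ^ t.length) • ((-(U * A a)) * (t.map A).prod) := by rw [AU a]
        _ = ((-1 : ℂ) ^ t.length * (-1)) • (U * (A a * (t.map A).prod)) := by
            rw [Matrix.neg_mul, smul_neg, mul_neg_one, neg_smul, Matrix.mul_assoc]
  intro I hI hinj
  have Pkey : ∀ σ : Fin I → Fin 2,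
      (List.ofFn fun i => A (σ i)).prod * U
        = ((-1 : ℂ) ^ I) • (U * (List.ofFn fun i => A (σ i)).prod) := by
    intro σ
    have h := prodkey (List.ofFn σ)
    simpa [List.map_ofFn, Function.comp_def] using h
  rcases Nat.even_or_odd I with hE | hO
  · -- even case
    have hIpow : (-1 : ℂ) ^ I = 1 := hE.neg_one_pow
    have comm : ∀ σ : Fin I → Fin 2,
        U * (List.ofFn fun i => A (σ i)).prod
          = (List.ofFn fun i => A (σ i)).prod * U := by
      intro σ
      rw [Pkey σ, hIpow, one_smul]
    have hΓ : ∀ m : Fin 2, GammaMPS A I (Uᴴ * A m * U) = GammaMPS A I (A m) := by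
      intro m
      funext σ
      simp only [GammaMPS]
      set P := (List.ofFn fun i => A (σ i)).prod with hP
      calc trace (Uᴴ * A m * U * P)
          = trace ((A m * U * P) * Uᴴ) := by
            rw [Matrix.mul_assoc, Matrix.mul_assoc, ← Matrix.mul_assoc (A m),
              Matrix.trace_mul_comm]
        _ = trace (A m * P) := by
            rw [Matrix.mul_assoc (A m), comm σ, ← Matrix.mul_assoc,
              Matrix.mul_assoc, hU2, Matrix.mul_one]
    have hAzero : ∀ m : Fin 2, A m = 0 := by
      intro m
      have h := hinj (hΓ m)
      rw [key m] at h
      have : A m + A m = 0 := by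
        nth_rewrite 1 [← h]
        abel
      have h2 : (2 : ℂ) • A m = 0 := by
        rw [two_smul]; exact this
      simpa using h2
    obtain ⟨I', rfl⟩ : ∃ I', I = I' + 1 := ⟨I - 1, by omega⟩
    have hzero : ∀ M : Matrix (Fin N) (Fin N) ℂ, GammaMPS A (I' + 1) M = 0 := by
      intro M
      funext σ
      simp [GammaMPS, List.ofFn_succ, hAzero (σ 0)]
    have h10 : (1 : Matrix (Fin N) (Fin N) ℂ) = 0 := hinj (by rw [hzero, hzero])
    have := congrFun (congrFun h10 ⟨0, hN⟩) ⟨0, hN⟩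
    simp [Matrix.one_apply] at this
  · -- odd case
    have hIpow : (-1 : ℂ) ^ I = -1 := hO.neg_one_pow
    have hΓ : GammaMPS A I U = GammaMPS A I 0 := by
      funext σ
      simp only [GammaMPS]
      set P := (List.ofFn fun i => A (σ i)).prod with hP
      have h1 : trace (U * P) = -trace (U * P) := by
        calc trace (U * P) = trace (P * U) := Matrix.trace_mul_comm U P
          _ = trace ((-1 : ℂ) • (U * P)) := by rw [Pkey σ, hIpow]
          _ = -trace (U * P) := by simp
      have h2 : trace (U * P) = 0 := by
        linear_combination h1 / 2
      rw [h2]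
      simp
    have hU0 : U = 0 := hinj hΓ
    rw [hU0] at hU1
    simp only [Matrix.mul_zero] at hU1
    have := congrFun (congrFun hU1 ⟨0, hN⟩) ⟨0, hN⟩
    simp [Matrix.one_apply] at this
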